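/- Let G be a groupoid, R an associative ring, and α = (D_g, α_g)_{g∈G} a partial action of G on R such that D_g is s-unital for every g ∈ G and R = ⊕_{e∈G₀} D_e. Then: (i) if J is a G-invariant ideal of R, then J ⋊_{α^J} G = ⊕_{g∈G} (J ∩ D_g) δ_g is a G-graded ideal of R ⋊_α G; (ii) if I is a G-graded ideal of R ⋊_α G, then P₀(I ∩ ⊕_{e∈G₀} D_e δ_e) = P₀(I). -/

import Mathlib

open scoped Classical

/-- A (discrete) groupoid, presented as its set of morphisms `G`, with source map `s`,
range map `r`, inversion `inv` and a partially defined multiplication `mul`.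
The units (identity morphisms, i.e. the objects) are the elements `e` with `r e = e`. -/
structure DGroupoid (G : Type*) where
  s : G → G
  r : G → G
  inv : G → G
  mul : (g h : G) → s g = r h → G
  s_inv : ∀ g, s (inv g) = r g
  r_inv : ∀ g, r (inv g) = s g
  inv_inv : ∀ g, inv (inv g) = g
  r_mul : ∀ g h (p : s g = r h), r (mul g h p) = r g
  s_mul : ∀ g h (p : s g = r h), s (mul g h p) = s h
  r_idem : ∀ g, r (r g) = r g
  s_of_r : ∀ g, s (r g) = r g
  r_of_s : ∀ g, r (s g) = s g
  s_idem : ∀ g, s (s g) = s g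
  assoc : ∀ g h k (p : s g = r h) (q : s h = r k) (pq : s (mul g h p) = r k)
      (qp : s g = r (mul h k q)), mul (mul g h p) k pq = mul g (mul h k q) qp
  id_mul : ∀ g (p : s (r g) = r g), mul (r g) g p = g
  mul_id : ∀ g (p : s g = r (s g)), mul g (s g) p = g
  mul_inv : ∀ g (p : s g = r (inv g)), mul g (inv g) p = r g
  inv_mul : ∀ g (p : s (inv g) = r g), mul (inv g) g p = s g

namespace DGroupoid

/-- `e` is a unit (an object, identified with its identity morphism) of the groupoid. -/
def unit {G : Type*} (𝔾 : DGroupoid G) (e : G) : Prop := 𝔾.r e = e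

end DGroupoid

section RingDefs

variable {R : Type*} [NonUnitalRing R]

/-- A subset of a (possibly non-unital) ring is a two-sided ideal. -/
def IsRingIdeal (J : Set R) : Prop :=
  (0 : R) ∈ J ∧ (∀ x ∈ J, ∀ y ∈ J, x + y ∈ J) ∧ (∀ x ∈ J, -x ∈ J) ∧
    ∀ x ∈ J, ∀ y : R, x * y ∈ J ∧ y * x ∈ J

/-- A subset of a ring, viewed as a ring, is s-unital: every `x` in it lies in
`xT ∩ Tx`. -/
def IsSUnitalSet (J : Set R) : Prop :=
  ∀ x ∈ J, (∃ u ∈ J, x * u = x) ∧ (∃ v ∈ J, v * x = x)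

end RingDefs

/-- A partial action `α = (D_g, α_g)_{g ∈ G}` of a groupoid `𝔾` on a
(possibly non-unital, associative) ring `R`:  each `D_{r g}` is a two-sided ideal of `R`,
each `D_g` is a two-sided ideal of `D_{r g}`, and `α_g = act g` restricts to a ring
isomorphism `D_{g⁻¹} → D_g` (the function `act g` is arbitrary outside `D_{g⁻¹}`),
satisfying the axioms of a partial action. -/
structure PartialAction {G : Type*} (𝔾 : DGroupoid G) (R : Type*) [NonUnitalRing R] where
  D : G → Set R
  zero_mem : ∀ g, (0 : R) ∈ D g
  add_mem : ∀ g, ∀ x ∈ D g, ∀ y ∈ D g, x + y ∈ D g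
  neg_mem : ∀ g, ∀ x ∈ D g, -x ∈ D g
  subset_r : ∀ g, D g ⊆ D (𝔾.r g)
  idealR : ∀ g, IsRingIdeal (D (𝔾.r g))
  idealInR : ∀ g, ∀ x ∈ D g, ∀ y ∈ D (𝔾.r g), x * y ∈ D g ∧ y * x ∈ D g
  act : G → R → R
  act_mem : ∀ g, ∀ x ∈ D (𝔾.inv g), act g x ∈ D g
  act_add : ∀ g, ∀ x ∈ D (𝔾.inv g), ∀ y ∈ D (𝔾.inv g), act g (x + y) = act g x + act g y
  act_mul : ∀ g, ∀ x ∈ D (𝔾.inv g), ∀ y ∈ D (𝔾.inv g), act g (x * y) = act g x * act g y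
  act_inv : ∀ g, ∀ x ∈ D (𝔾.inv g), act (𝔾.inv g) (act g x) = x
  act_unit : ∀ e, 𝔾.unit e → ∀ x ∈ D e, act e x = x
  act_comp_mem : ∀ g h (p : 𝔾.s g = 𝔾.r h), ∀ x, x ∈ D (𝔾.inv g) → x ∈ D h →
      act (𝔾.inv h) x ∈ D (𝔾.inv (𝔾.mul g h p))
  act_comp : ∀ g h (p : 𝔾.s g = 𝔾.r h), ∀ x ∈ D (𝔾.inv h), act h x ∈ D (𝔾.inv g) →
      act g (act h x) = act (𝔾.mul g h p) x

namespace PartialAction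

variable {G : Type*} {R : Type*} [NonUnitalRing R] {𝔾 : DGroupoid G} (P : PartialAction 𝔾 R)

/-- `R = ⊕_{e ∈ G₀} D_e`: every element of `R` decomposes as a finite sum of elements
of the `D_e` (`e` a unit), and the decomposition is unique (a finite sum of elements of
the distinct `D_e`'s which vanishes has all terms zero). -/
def directSum : Prop :=
  (∀ x : R, ∃ f : G →₀ R, (∀ g ∈ f.support, 𝔾.unit g) ∧ (∀ g, f g ∈ P.D g) ∧
      (f.sum fun _ v => v) = x) ∧
    ∀ f : G →₀ R, (∀ g ∈ f.support, 𝔾.unit g) → (∀ g, f g ∈ P.D g) →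
      (f.sum fun _ v => v) = 0 → f = 0

/-- The carrier of the partial skew groupoid ring `R ⋊_α G`: finitely supported
functions `a : G →₀ R` (thought of as `Σ_g a_g δ_g`) with `a g ∈ D g`. -/
def carrier : Set (G →₀ R) := {a | ∀ g, a g ∈ P.D g}

/-- The multiplication of the partial skew groupoid ring:
`(a_g δ_g)(b_h δ_h) = α_g(α_{g⁻¹}(a_g) b_h) δ_{gh}` when `(g,h)` is composable,
and `0` otherwise. -/
noncomputable def skewMul (a b : G →₀ R) : G →₀ R :=
  a.support.sum fun g => b.support.sum fun h =>
    if p : 𝔾.s g = 𝔾.r h then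
      Finsupp.single (𝔾.mul g h p) (P.act g (P.act (𝔾.inv g) (a g) * b h))
    else 0

/-- The subset `⊕_{e ∈ G₀} D_e δ_e` of `R ⋊_α G`: elements supported on units. -/
def diag : Set (G →₀ R) := {a | (∀ g, a g ∈ P.D g) ∧ ∀ g ∈ a.support, 𝔾.unit g}

/-- `I` is a two-sided ideal of the partial skew groupoid ring `R ⋊_α G`. -/
def IsSkewIdeal (I : Set (G →₀ R)) : Prop :=
  I ⊆ P.carrier ∧ (0 : G →₀ R) ∈ I ∧ (∀ x ∈ I, ∀ y ∈ I, x + y ∈ I) ∧ (∀ x ∈ I, -x ∈ I) ∧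
    ∀ x ∈ I, ∀ y ∈ P.carrier, P.skewMul x y ∈ I ∧ P.skewMul y x ∈ I

/-- The projection `P₀ : R ⋊_α G → R`, `Σ_g a_g δ_g ↦ Σ_{e ∈ G₀} a_e`. -/
noncomputable def P0 (_P : PartialAction 𝔾 R) (a : G →₀ R) : R :=
  a.sum fun g v => if 𝔾.unit g then v else 0

/-- An ideal `I` of `R ⋊_α G` is `G`-graded if it is generated by its homogeneous
components, i.e. `I = ⊕_g (I ∩ D_g δ_g)`. -/
def IsGradedIdeal (I : Set (G →₀ R)) : Prop :=
  P.IsSkewIdeal I ∧ ∀ a ∈ I, ∀ g : G, Finsupp.single g (a g) ∈ I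

/-- `J` is a `G`-invariant (two-sided) ideal of `R`: `α_g(D_{g⁻¹} ∩ J) ⊆ J`. -/
def IsInvIdeal (J : Set R) : Prop :=
  IsRingIdeal J ∧ ∀ g, ∀ x ∈ P.D (𝔾.inv g) ∩ J, P.act g x ∈ J

/-- The subset `J ⋊_{α^J} G = ⊕_g (J ∩ D_g) δ_g` of `R ⋊_α G` attached to a
`G`-invariant ideal `J` of `R`. -/
def skewOf (J : Set R) : Set (G →₀ R) := {a | ∀ g, a g ∈ P.D g ∩ J}

/-- `⊕_{e ∈ G₀} D_e δ_e` is a maximal commutative subring of `R ⋊_α G`: it is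
commutative and coincides with its centralizer. -/
def IsMaxCommDiag : Prop :=
  (∀ a ∈ P.diag, ∀ b ∈ P.diag, P.skewMul a b = P.skewMul b a) ∧
    ∀ b ∈ P.carrier, (∀ a ∈ P.diag, P.skewMul a b = P.skewMul b a) → b ∈ P.diag

/-- The partial action has the intersection property: every nonzero ideal of
`R ⋊_α G` intersects `⊕_{e ∈ G₀} D_e δ_e` nontrivially. -/
def HasIntersectionProperty : Prop :=
  ∀ I : Set (G →₀ R), P.IsSkewIdeal I → I ≠ {0} → I ∩ P.diag ≠ {0}

/-- `R` is `G`-simple: the only `G`-invariant ideals of `R` are `{0}` and `R`. -/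
def GSimple : Prop := ∀ J : Set R, P.IsInvIdeal J → J = {0} ∨ J = Set.univ

/-- `R` is `G`-prime: if `I, J` are `G`-invariant ideals with `IJ = {0}`, then
`I = {0}` or `J = {0}`. -/
def GPrime : Prop :=
  ∀ I J : Set R, P.IsInvIdeal I → P.IsInvIdeal J →
    (∀ x ∈ I, ∀ y ∈ J, x * y = 0) → I = {0} ∨ J = {0}

/-- `R ⋊_α G` is graded simple. -/
def GradedSimple : Prop :=
  ∀ I : Set (G →₀ R), P.IsGradedIdeal I → I = {0} ∨ I = P.carrier

/-- `R ⋊_α G` is graded prime. -/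
def GradedPrime : Prop :=
  ∀ I J : Set (G →₀ R), P.IsGradedIdeal I → P.IsGradedIdeal J →
    (∀ x ∈ I, ∀ y ∈ J, P.skewMul x y = 0) → I = {0} ∨ J = {0}

/-- `R ⋊_α G` is a prime ring. -/
def SkewPrime : Prop :=
  ∀ I J : Set (G →₀ R), P.IsSkewIdeal I → P.IsSkewIdeal J →
    (∀ x ∈ I, ∀ y ∈ J, P.skewMul x y = 0) → I = {0} ∨ J = {0}

/-- `R ⋊_α G` is a simple ring. -/
def SkewSimple : Prop :=
  ∀ I : Set (G →₀ R), P.IsSkewIdeal I → I = {0} ∨ I = P.carrier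

end PartialAction

section Aux

variable {G R : Type*} [NonUnitalRing R] {𝔾 : DGroupoid G} (P : PartialAction 𝔾 R)

lemma aux_single_coeff_mem {Q : G → Set R} (h0 : ∀ k, (0 : R) ∈ Q k) {g : G} {v : R}
    (hv : v ∈ Q g) : ∀ k, (Finsupp.single g v) k ∈ Q k := by
  intro k
  rw [Finsupp.single_apply]
  split_ifs with h
  · exact h ▸ hv
  · exact h0 k

lemma aux_skewMul_coeff_mem {Q : G → Set R} (h0 : ∀ k, (0 : R) ∈ Q k)
    (hadd : ∀ k, ∀ x ∈ Q k, ∀ y ∈ Q k, x + y ∈ Q k) (a b : G →₀ R)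
    (hm : ∀ g h (p : 𝔾.s g = 𝔾.r h),
      P.act g (P.act (𝔾.inv g) (a g) * b h) ∈ Q (𝔾.mul g h p)) :
    ∀ k, P.skewMul a b k ∈ Q k := by
  intro k
  unfold PartialAction.skewMul
  rw [Finsupp.finset_sum_apply]
  refine Finset.sum_induction _ (· ∈ Q k) (fun x y hx hy => hadd k x hx y hy) (h0 k) ?_
  intro g _
  rw [Finsupp.finset_sum_apply]
  refine Finset.sum_induction _ (· ∈ Q k) (fun x y hx hy => hadd k x hx y hy) (h0 k) ?_
  intro h _
  split_ifs with p
  · exact aux_single_coeff_mem h0 (hm g h p) k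
  · simpa using h0 k

lemma aux_key_mem (g h : G) (p : 𝔾.s g = 𝔾.r h) {z : R}
    (hz1 : z ∈ P.D (𝔾.inv g)) (hz2 : z ∈ P.D h) :
    P.act g z ∈ P.D (𝔾.mul g h p) ∧
      ∀ J : Set R, P.IsInvIdeal J → z ∈ J → P.act g z ∈ J := by
  have hz2' : z ∈ P.D (𝔾.inv (𝔾.inv h)) := by rw [𝔾.inv_inv]; exact hz2
  have hw : P.act (𝔾.inv h) z ∈ P.D (𝔾.inv (𝔾.mul g h p)) := P.act_comp_mem g h p z hz1 hz2
  have hwI : P.act (𝔾.inv h) z ∈ P.D (𝔾.inv h) := P.act_mem (𝔾.inv h) z hz2'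
  have hback : P.act h (P.act (𝔾.inv h) z) = z := by
    have := P.act_inv (𝔾.inv h) z hz2'
    rwa [𝔾.inv_inv] at this
  have hcomp : P.act g (P.act h (P.act (𝔾.inv h) z))
      = P.act (𝔾.mul g h p) (P.act (𝔾.inv h) z) :=
    P.act_comp g h p _ hwI (by rw [hback]; exact hz1)
  rw [hback] at hcomp
  constructor
  · rw [hcomp]; exact P.act_mem _ _ hw
  · intro J hJ hzJ
    have hwJ : P.act (𝔾.inv h) z ∈ J := hJ.2 (𝔾.inv h) z ⟨hz2', hzJ⟩
    rw [hcomp]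
    exact hJ.2 _ _ ⟨hw, hwJ⟩

lemma aux_prod_mem (g h : G) (p : 𝔾.s g = 𝔾.r h) {x y : R}
    (hx : x ∈ P.D (𝔾.inv g)) (hy : y ∈ P.D h) :
    x * y ∈ P.D (𝔾.inv g) ∧ x * y ∈ P.D h := by
  have hrg : 𝔾.r (𝔾.inv g) = 𝔾.r h := by rw [𝔾.r_inv, p]
  have hx' : x ∈ P.D (𝔾.r h) := by rw [← hrg]; exact P.subset_r _ hx
  have hy' : y ∈ P.D (𝔾.r (𝔾.inv g)) := by rw [hrg]; exact P.subset_r _ hy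
  exact ⟨(P.idealInR (𝔾.inv g) x hx y hy').1, (P.idealInR h y hy x hx').2⟩

lemma aux_act_inv_mem (g : G) {v : R} (hv : v ∈ P.D g) :
    P.act (𝔾.inv g) v ∈ P.D (𝔾.inv g) :=
  P.act_mem (𝔾.inv g) v (by rw [𝔾.inv_inv]; exact hv)

end Aux

/-- (i) If `J` is a `G`-invariant ideal of `R`, then
`J ⋊_{α^J} G = ⊕_g (J ∩ D_g) δ_g` is a `G`-graded ideal of `R ⋊_α G`.
(ii) If `I` is a `G`-graded ideal of `R ⋊_α G`, then
`P₀(I ∩ ⊕_{e ∈ G₀} D_e δ_e) = P₀(I)`. -/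
theorem skewOf_isGraded_and_P0_inter_diag_eq {G R : Type*} [NonUnitalRing R]
    (𝔾 : DGroupoid G) (P : PartialAction 𝔾 R)
    (hsu : ∀ g, IsSUnitalSet (P.D g)) (hds : P.directSum) :
    (∀ J : Set R, P.IsInvIdeal J → P.IsGradedIdeal (P.skewOf J)) ∧
      (∀ I : Set (G →₀ R), P.IsGradedIdeal I → P.P0 '' (I ∩ P.diag) = P.P0 '' I) := by
  constructor
  · -- Part (i)
    intro J hJ
    have h0 : ∀ k, (0 : R) ∈ P.D k ∩ J := fun k => ⟨P.zero_mem k, hJ.1.1⟩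
    have hadd : ∀ k, ∀ x ∈ P.D k ∩ J, ∀ y ∈ P.D k ∩ J, x + y ∈ P.D k ∩ J :=
      fun k x hx y hy => ⟨P.add_mem k x hx.1 y hy.1, hJ.1.2.1 x hx.2 y hy.2⟩
    refine ⟨⟨fun a ha g => (ha g).1, fun g => h0 g, ?_, ?_, ?_⟩, ?_⟩
    · intro x hx y hy g
      simpa using hadd g _ (hx g) _ (hy g)
    · intro x hx g
      simpa using ⟨P.neg_mem g _ (hx g).1, hJ.1.2.2.1 _ (hx g).2⟩
    · intro a ha y hy
      constructor
      · intro k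
        refine aux_skewMul_coeff_mem P h0 hadd a y ?_ k
        intro g h p
        have hag : P.act (𝔾.inv g) (a g) ∈ P.D (𝔾.inv g) := aux_act_inv_mem P g (ha g).1
        have hagJ : P.act (𝔾.inv g) (a g) ∈ J :=
          hJ.2 (𝔾.inv g) (a g) ⟨by rw [𝔾.inv_inv]; exact (ha g).1, (ha g).2⟩
        have hprod := aux_prod_mem P g h p hag (hy h)
        have hpJ : P.act (𝔾.inv g) (a g) * y h ∈ J := (hJ.1.2.2.2 _ hagJ (y h)).1
        have hkey := aux_key_mem P g h p hprod.1 hprod.2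
        exact ⟨hkey.1, hkey.2 J hJ hpJ⟩
      · intro k
        refine aux_skewMul_coeff_mem P h0 hadd y a ?_ k
        intro g h p
        have hag : P.act (𝔾.inv g) (y g) ∈ P.D (𝔾.inv g) := aux_act_inv_mem P g (hy g)
        have hprod := aux_prod_mem P g h p hag (ha h).1
        have hpJ : P.act (𝔾.inv g) (y g) * a h ∈ J :=
          (hJ.1.2.2.2 _ (ha h).2 (P.act (𝔾.inv g) (y g))).2
        have hkey := aux_key_mem P g h p hprod.1 hprod.2
        exact ⟨hkey.1, hkey.2 J hJ hpJ⟩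
    · intro a ha g
      exact aux_single_coeff_mem h0 (ha g)
  · -- Part (ii)
    intro I hI
    apply Set.Subset.antisymm
    · exact Set.image_mono Set.inter_subset_left
    · rintro _ ⟨a, haI, rfl⟩
      classical
      set b : G →₀ R := ∑ g ∈ a.support, if 𝔾.unit g then Finsupp.single g (a g) else 0
        with hb
      have hterm : ∀ g, (if 𝔾.unit g then Finsupp.single g (a g) else 0)
          = Finsupp.single g (if 𝔾.unit g then a g else 0) := by
        intro g; split_ifs <;> simp
      have hbk : ∀ k, b k = if 𝔾.unit k then a k else 0 := by
        intro k
        rw [hb]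
        simp only [hterm]
        rw [Finsupp.finset_sum_apply]
        simp only [Finsupp.single_apply]
        rw [Finset.sum_ite_eq']
        by_cases hk : k ∈ a.support
        · rw [if_pos hk]
        · rw [if_neg hk, Finsupp.notMem_support_iff.mp hk, ite_self]
      have hbI : b ∈ I := by
        rw [hb]
        refine Finset.sum_induction _ (· ∈ I) (fun x y hx hy => hI.1.2.2.1 x hx y hy)
          hI.1.2.1 ?_
        intro g _
        split_ifs
        · exact hI.2 a haI g
        · exact hI.1.2.1
      have hbd : b ∈ P.diag := by
        constructor
        · intro g
          rw [hbk g]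
          split_ifs
          · exact hI.1.1 haI g
          · exact P.zero_mem g
        · intro g hg
          by_contra hu
          exact Finsupp.mem_support_iff.mp hg (by rw [hbk g, if_neg hu])
      have hsub : b.support ⊆ a.support := by
        intro k hk
        apply Finsupp.mem_support_iff.mpr
        intro h0
        apply Finsupp.mem_support_iff.mp hk
        rw [hbk k, h0, ite_self]
      have hP0 : P.P0 b = P.P0 a := by
        unfold PartialAction.P0
        rw [Finsupp.sum_of_support_subset b hsub _ (fun g _ => by rw [ite_self])]
        rw [Finsupp.sum]
        apply Finset.sum_congr rfl
        intro g _
        rw [hbk g]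
        split_ifs <;> rfl
      exact ⟨b, ⟨hbI, hbd⟩, hP0⟩
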